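/- Let Π_L(τ,ξ) be the spectral projector onto Ker L_1(τ,ξ) along Range L_1(τ,ξ) (assuming 0 is a semi-simple eigenvalue and τ ≠ 0). Then the dN×dN matrix M whose (i,j) block equals -(ξ_i/τ) A_i Π_L(τ,ξ) (same for all j) satisfies: M² = M, M L̃_1(τ,ξ) = 0, L̃_1(τ,ξ) M = 0, and rank M = dim Ker L̃_1(τ,ξ). Hence M is the spectral projector onto Ker L̃_1(τ,ξ) along Range L̃_1(τ,ξ). -/

import Mathlib

open Matrix

/-- The `dN×dN` matrix with constant block columns `-(ξᵢ/τ) Aᵢ Π_L(τ,ξ)` is the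
spectral projector onto `Ker L̃₁(τ,ξ)` along `Range L̃₁(τ,ξ)`: it is idempotent,
annihilates and is annihilated by `L̃₁(τ,ξ)`, and has rank `dim Ker L̃₁(τ,ξ)`. -/
theorem berenger_spectral_projector (N d : ℕ)
    (A : Fin d → Matrix (Fin N) (Fin N) ℂ)
    (τ : ℂ) (hτ : τ ≠ 0) (ξ : Fin d → ℂ)
    (L1 : Matrix (Fin N) (Fin N) ℂ)
    (hL1 : L1 = τ • (1 : Matrix (Fin N) (Fin N) ℂ) + ∑ l, ξ l • A l)
    (hchar : L1.det = 0)
    (P : Matrix (Fin N) (Fin N) ℂ)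
    (hP1 : P * P = P) (hP2 : P * L1 = 0) (hP3 : L1 * P = 0)
    (hP4 : P.rank = Module.finrank ℂ (LinearMap.ker L1.mulVecLin))
    (tL1 : Matrix (Fin d × Fin N) (Fin d × Fin N) ℂ)
    (htL1 : tL1 = Matrix.of fun p q : Fin d × Fin N =>
        ξ p.1 * A p.1 p.2 q.2 + if p = q then τ else 0)
    (M : Matrix (Fin d × Fin N) (Fin d × Fin N) ℂ)
    (hM : M = Matrix.of fun p q : Fin d × Fin N =>
        -(ξ p.1 / τ) * (A p.1 * P) p.2 q.2) :
    M * M = M ∧ M * tL1 = 0 ∧ tL1 * M = 0 ∧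
    M.rank = Module.finrank ℂ (LinearMap.ker tL1.mulVecLin) := by
  set S : Matrix (Fin N) (Fin N) ℂ := ∑ l, ξ l • A l with hS
  -- basic relations
  have hSP : S * P = (-τ) • P := by
    have h := hP3
    rw [hL1, add_mul, Matrix.smul_mul, one_mul] at h
    have := eq_neg_of_add_eq_zero_right h
    rw [this]; simp
  have hPS : P * S = (-τ) • P := by
    have h := hP2
    rw [hL1, mul_add, Matrix.mul_smul, mul_one] at h
    have h2 := eq_neg_of_add_eq_zero_right h
    rw [h2]; simp
  -- block factorization
  set F : Matrix (Fin N) (Fin d × Fin N) ℂ :=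
    Matrix.of (fun n (q : Fin d × Fin N) => if n = q.2 then 1 else 0) with hF
  set G : Matrix (Fin d × Fin N) (Fin N) ℂ :=
    Matrix.of (fun (p : Fin d × Fin N) n => ξ p.1 * A p.1 p.2 n) with hG
  have hFG : F * G = S := by
    ext m n
    simp [hF, hG, hS, Matrix.mul_apply, Fintype.sum_prod_type, Matrix.sum_apply,
      ite_mul, Finset.sum_comm (γ := Fin d)]
  have hME : M = (-τ⁻¹) • (G * (P * F)) := by
    ext p q
    simp only [hM, hF, hG, Matrix.smul_apply, Matrix.mul_apply, Matrix.of_apply,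
      mul_ite, mul_one, mul_zero, Finset.sum_ite_eq, Finset.sum_ite_eq',
      Finset.mem_univ, if_true, smul_eq_mul]
    rw [Finset.mul_sum, Finset.mul_sum]
    apply Finset.sum_congr rfl
    intro n _
    rw [div_eq_mul_inv]
    ring
  have htE : tL1 = G * F + τ • (1 : Matrix (Fin d × Fin N) (Fin d × Fin N) ℂ) := by
    ext p q
    simp [htL1, hF, hG, Matrix.mul_apply, Matrix.one_apply, mul_ite, ite_mul]
  -- reassociated rewrite helpers
  have hFG' : ∀ X : Matrix (Fin N) (Fin d × Fin N) ℂ, F * (G * X) = S * X := by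
    intro X; rw [← Matrix.mul_assoc, hFG]
  have hPS' : ∀ X : Matrix (Fin N) (Fin d × Fin N) ℂ,
      P * (S * X) = (-τ) • (P * X) := by
    intro X; rw [← Matrix.mul_assoc, hPS, Matrix.smul_mul]
  have hSP' : ∀ X : Matrix (Fin N) (Fin d × Fin N) ℂ,
      S * (P * X) = (-τ) • (P * X) := by
    intro X; rw [← Matrix.mul_assoc, hSP, Matrix.smul_mul]
  have hPP' : ∀ X : Matrix (Fin N) (Fin d × Fin N) ℂ,
      P * (P * X) = P * X := by
    intro X; rw [← Matrix.mul_assoc, hP1]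
  -- idempotency
  have hMM : M * M = M := by
    rw [hME]
    simp only [Matrix.smul_mul, Matrix.mul_smul, smul_smul, Matrix.mul_assoc,
      hFG', hPS', hPP']
    congr 1
    field_simp
  have hMT : M * tL1 = 0 := by
    rw [hME, htE]
    simp only [Matrix.smul_mul, Matrix.mul_smul, smul_smul, mul_add,
      Matrix.mul_assoc, Matrix.mul_one, hFG', hPS', hPP']
    rw [← add_smul]
    convert zero_smul ℂ (G * (P * F)) using 2
    field_simp
    ring
  have hTM : tL1 * M = 0 := by
    rw [hME, htE]
    simp only [Matrix.smul_mul, Matrix.mul_smul, smul_smul, add_mul,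
      Matrix.mul_assoc, Matrix.one_mul, hFG', hSP', hPP']
    rw [← add_smul]
    convert zero_smul ℂ (G * (P * F)) using 2
    field_simp
    ring
  refine ⟨hMM, hMT, hTM, ?_⟩
  -- rank statement
  have hker : LinearMap.range P.mulVecLin = LinearMap.ker L1.mulVecLin := by
    apply Submodule.eq_of_le_of_finrank_le
    · rintro x ⟨y, rfl⟩
      simp only [LinearMap.mem_ker, Matrix.mulVecLin_apply, Matrix.mulVec_mulVec,
        hP3, Matrix.zero_mulVec]
    · rw [← hP4, Matrix.rank]
  have hrange : LinearMap.range M.mulVecLin = LinearMap.ker tL1.mulVecLin := by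
    apply le_antisymm
    · rintro x ⟨y, rfl⟩
      simp only [LinearMap.mem_ker, Matrix.mulVecLin_apply, Matrix.mulVec_mulVec,
        hTM, Matrix.zero_mulVec]
    · intro x hx
      simp only [LinearMap.mem_ker, Matrix.mulVecLin_apply] at hx
      set y : Fin N → ℂ := F.mulVec x with hy
      have hx' : G.mulVec y + τ • x = 0 := by
        rw [← hx, htE, Matrix.add_mulVec, Matrix.smul_mulVec, Matrix.one_mulVec,
          hy, Matrix.mulVec_mulVec]
      have hxval : x = (-τ⁻¹) • G.mulVec y := by
        have h2 : G.mulVec y = -(τ • x) := eq_neg_of_add_eq_zero_left hx'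
        rw [h2, neg_smul, smul_neg, neg_neg, smul_smul, inv_mul_cancel₀ hτ, one_smul]
      have hSy : S.mulVec y = (-τ) • y := by
        have hyy : F.mulVec x = y := rfl
        rw [hxval] at hyy
        rw [Matrix.mulVec_smul, Matrix.mulVec_mulVec, hFG] at hyy
        calc S.mulVec y = (-τ) • ((-τ⁻¹) • S.mulVec y) := by
              rw [smul_smul, show (-τ) * -τ⁻¹ = 1 from by field_simp, one_smul]
          _ = (-τ) • y := by rw [hyy]
      have hy_ker : y ∈ LinearMap.ker L1.mulVecLin := by
        simp only [LinearMap.mem_ker, Matrix.mulVecLin_apply, hL1, Matrix.add_mulVec,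
          Matrix.smul_mulVec, Matrix.one_mulVec, ← hS, hSy]
        simp
      rw [← hker] at hy_ker
      obtain ⟨z, hz⟩ := hy_ker
      have hPy : P.mulVec y = y := by
        simp only [Matrix.mulVecLin_apply] at hz
        rw [← hz, Matrix.mulVec_mulVec, hP1]
      refine ⟨x, ?_⟩
      simp only [Matrix.mulVecLin_apply]
      rw [hME, Matrix.smul_mulVec, ← Matrix.mulVec_mulVec, ← Matrix.mulVec_mulVec,
        ← hy, hPy, ← hxval]
  rw [Matrix.rank, hrange]
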